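/- For every prime power p^n, the group ⊕_{α < 2^{ℵ₀}} ℤ_{p^n} is isomorphic to the countable product (ℤ_{p^n})^ω. -/

import Mathlib

open Cardinal Finsupp

section Aux
variable {p n : ℕ} [Fact p.Prime] (hn : 1 ≤ n)

private lemma aux_dvd (p : ℕ) (hn : 1 ≤ n) : p ∣ p ^ n := dvd_pow_self p (by omega)

private lemma aux_tor (hn : 1 ≤ n) {k : ℕ} (hk : k < n) (x : ZMod (p ^ n))
    (hx : (p : ZMod (p ^ n)) ^ k * x = 0) : p ∣ x.val := by
  haveI : NeZero (p ^ n) := ⟨pow_ne_zero n (Fact.out : p.Prime).ne_zero⟩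
  have h1 : ((p ^ k * x.val : ℕ) : ZMod (p ^ n)) = 0 := by
    push_cast
    rw [ZMod.natCast_rightInverse x, hx]
  rw [ZMod.natCast_eq_zero_iff] at h1
  have h2 : p ^ k * p ^ (n - k) ∣ p ^ k * x.val := by
    rw [← pow_add]
    have : k + (n - k) = n := by omega
    rw [this]; exact h1
  have h3 : p ^ (n - k) ∣ x.val :=
    (Nat.mul_dvd_mul_iff_left (Nat.pow_pos (n := k) (Fact.out : p.Prime).pos)).mp h2
  exact dvd_trans (dvd_pow_self p (by omega : n - k ≠ 0)) h3

private lemma aux_div (hn : 1 ≤ n) (k : ℕ) (x : ZMod (p ^ n)) (h : p ^ k ∣ x.val) :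
    x = (p : ZMod (p ^ n)) ^ k * ((x.val / p ^ k : ℕ) : ZMod (p ^ n)) := by
  haveI : NeZero (p ^ n) := ⟨pow_ne_zero n (Fact.out : p.Prime).ne_zero⟩
  conv_lhs => rw [← ZMod.natCast_rightInverse x]
  rw [← Nat.cast_pow, ← Nat.cast_mul, Nat.mul_div_cancel' h]
end Aux

theorem stmt_11 (p n : ℕ) (hp : p.Prime) (hn : 1 ≤ n)
    (I : Type) (hI : Cardinal.mk I = Cardinal.continuum) :
    Nonempty ((I →₀ ZMod (p ^ n)) ≃+ (ℕ → ZMod (p ^ n))) := by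
  haveI : Fact p.Prime := ⟨hp⟩
  haveI : NeZero (p ^ n) := ⟨pow_ne_zero n hp.ne_zero⟩
  set R := ZMod (p ^ n) with hR
  -- the reduction map
  set φ : R →+* ZMod p := ZMod.castHom (aux_dvd p hn) (ZMod p) with hφ
  have hφnat : ∀ a : ℕ, φ ((a : ℕ) : R) = ((a : ℕ) : ZMod p) := fun a => map_natCast φ a
  have hφ0 : ∀ x : R, φ x = 0 ↔ p ∣ x.val := by
    intro x
    conv_lhs => rw [← ZMod.natCast_rightInverse x]
    rw [hφnat, ZMod.natCast_eq_zero_iff]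
  -- a basis of (ℕ → ZMod p)
  obtain ⟨⟨B, b⟩⟩ := Module.Free.exists_basis (R := ZMod p) (M := ℕ → ZMod p)
  have hBcard : #B = Cardinal.continuum := by
    rw [b.mk_eq_rank'', rank_fun_infinite, ← Cardinal.power_def, Cardinal.mk_fintype,
      ZMod.card, Cardinal.mk_denumerable]
    exact Cardinal.nat_power_aleph0 hp.two_le
  -- lift the basis
  set x : B → (ℕ → R) := fun β i => (((b β) i).val : R) with hx
  have hπx : ∀ β i, φ (x β i) = b β i := by
    intro β i
    rw [hx, hφnat, ZMod.natCast_rightInverse]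
  -- compatibility of linear combinations with φ
  have key : ∀ l : B →₀ R, (fun i => φ (Finsupp.linearCombination R x l i)) =
      Finsupp.linearCombination (ZMod p) b (l.mapRange φ (map_zero φ)) := by
    intro l
    induction l using Finsupp.induction_linear with
    | zero => funext i; simp
    | add f g hf hg =>
      funext i
      rw [Finsupp.mapRange_add (map_add φ), map_add, map_add]
      have := congrFun hf i
      have := congrFun hg i
      simp only [Pi.add_apply, map_add]
      rw [congrFun hf i, congrFun hg i]
    | single β c =>
      funext i
      rw [Finsupp.mapRange_single, Finsupp.linearCombination_single,
        Finsupp.linearCombination_single]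
      simp only [Pi.smul_apply, smul_eq_mul, map_mul, hπx]
  -- kernel lemma
  have hker : ∀ l : B →₀ R, (∀ i, φ (Finsupp.linearCombination R x l i) = 0) →
      ∀ β, p ∣ (l β).val := by
    intro l hl β
    have h0 : Finsupp.linearCombination (ZMod p) b (l.mapRange φ (map_zero φ)) = 0 := by
      rw [← key l]; funext i; exact hl i
    have := linearIndependent_iff.mp b.linearIndependent _ h0
    have hφl : φ (l β) = 0 := by
      have := congrArg (fun f => f β) this
      simpa using this
    exact (hφ0 _).mp hφl
  -- linear independence of x
  have indep : LinearIndependent R x := by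
    rw [linearIndependent_iff]
    intro l hl
    have main : ∀ k, k ≤ n → ∀ β, p ^ k ∣ (l β).val := by
      intro k
      induction k with
      | zero => simp
      | succ k ih =>
        intro hk β
        have hk' : k < n := by omega
        have hdvd := ih (by omega)
        set l' : B →₀ R := l.mapRange (fun c => ((c.val / p ^ k : ℕ) : R)) (by simp) with hl'
        have hvall : ∀ γ, l γ = (p : R) ^ k * l' γ := by
          intro γ
          rw [hl', Finsupp.mapRange_apply]
          exact aux_div hn k (l γ) (hdvd γ)
        have hleq : l = (p : R) ^ k • l' := by
          ext γ; rw [Finsupp.smul_apply, smul_eq_mul]; exact hvall γ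
        have hcomb : (p : R) ^ k • Finsupp.linearCombination R x l' = 0 := by
          rw [← map_smul, ← hleq, hl]
        have hcoord : ∀ i, p ∣ ((Finsupp.linearCombination R x l') i).val := by
          intro i
          refine aux_tor hn hk' _ ?_
          have := congrFun hcomb i
          simpa using this
        have hl'p : ∀ γ, p ∣ (l' γ).val := by
          refine hker l' fun i => (hφ0 _).mpr (hcoord i)
        -- conclude p^(k+1) ∣ (l β).val
        have hv : (l β).val = p ^ k * ((l β).val / p ^ k) := (Nat.mul_div_cancel' (hdvd β)).symm
        have hlt : (l β).val / p ^ k < p ^ n :=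
          lt_of_le_of_lt (Nat.div_le_self _ _) (ZMod.val_lt _)
        have hval' : (l' β).val = (l β).val / p ^ k := by
          rw [hl', Finsupp.mapRange_apply, ZMod.val_cast_of_lt hlt]
        have : p ∣ (l β).val / p ^ k := by rw [← hval']; exact hl'p β
        rw [pow_succ, hv]
        exact Nat.mul_dvd_mul_left _ this
    have hfin := main n le_rfl
    ext β
    have h1 : (l β).val = 0 := Nat.eq_zero_of_dvd_of_lt (hfin β) (ZMod.val_lt _)
    have := (ZMod.val_eq_zero (l β)).mp h1
    simpa using this
  -- spanning
  have step : ∀ u : ℕ → R, ∃ s ∈ Submodule.span R (Set.range x), ∃ u', u = s + (p : R) • u' := by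
    intro u
    set c : B →₀ ZMod p := b.repr (fun i => φ (u i)) with hc
    set c' : B →₀ R := c.mapRange (fun a => ((a.val : ℕ) : R)) (by simp) with hc'
    have hmr : c'.mapRange φ (map_zero φ) = c := by
      ext γ
      rw [Finsupp.mapRange_apply, hc', Finsupp.mapRange_apply, hφnat,
        ZMod.natCast_rightInverse]
    set s : ℕ → R := Finsupp.linearCombination R x c' with hs
    have hsmem : s ∈ Submodule.span R (Set.range x) := by
      rw [Finsupp.mem_span_range_iff_exists_finsupp]
      exact ⟨c', rfl⟩
    have hφs : ∀ i, φ (s i) = φ (u i) := by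
      intro i
      have h1 := congrFun (key c') i
      rw [hs, h1, hmr, hc, b.linearCombination_repr]
    have hdv : ∀ i, p ∣ (u i - s i).val := by
      intro i
      rw [← hφ0]
      rw [map_sub, hφs, sub_self]
    set u' : ℕ → R := fun i => (((u i - s i).val / p ^ 1 : ℕ) : R) with hu'
    refine ⟨s, hsmem, u', ?_⟩
    funext i
    have := aux_div hn 1 (u i - s i) (by rw [pow_one]; exact hdv i)
    rw [pow_one] at this
    have : u i - s i = (p : R) * u' i := by rw [hu']; exact this
    rw [Pi.add_apply, Pi.smul_apply, smul_eq_mul, ← this]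
    ring
  have iter : ∀ k, ∀ v : ℕ → R, ∃ s ∈ Submodule.span R (Set.range x),
      ∃ u, v = s + (p : R) ^ k • u := by
    intro k
    induction k with
    | zero =>
      intro v
      exact ⟨0, Submodule.zero_mem _, v, by simp⟩
    | succ k ih =>
      intro v
      obtain ⟨s, hs, u, hu⟩ := ih v
      obtain ⟨s', hs', u', hu'⟩ := step u
      refine ⟨s + (p : R) ^ k • s', ?_, u', ?_⟩
      · exact Submodule.add_mem _ hs (Submodule.smul_mem _ _ hs')
      · rw [hu, hu', smul_add, add_assoc, smul_smul, pow_succ]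
  have hspan : ⊤ ≤ Submodule.span R (Set.range x) := by
    intro v _
    obtain ⟨s, hs, u, hu⟩ := iter n v
    have hpn : (p : R) ^ n = 0 := by
      rw [← Nat.cast_pow]
      exact ZMod.natCast_self _
    rw [hu, hpn, zero_smul, add_zero]
    exact hs
  set bx : Module.Basis B R (ℕ → R) := Module.Basis.mk indep hspan with hbx
  obtain ⟨e⟩ := Cardinal.eq.mp (hI.trans hBcard.symm)
  set b0 : Module.Basis I R (I →₀ R) := Finsupp.basisSingleOne with hb0
  exact ⟨(b0.equiv bx e).toAddEquiv⟩
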